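/- Let (L_n) be empirical measures of a Markov chain on ℝ^d. Suppose that for a measure μ ∈ P(ℝ^d) and functions f(ε,δ) with lim_{ε→0} lim_{δ→0} f(ε,δ) = 0 and constants C_{n,T} with lim_{n→∞} lim_{T→∞} (1/T) log C_{n,T} = 0 and N = N(n,T) = ⌊T/(n + rτ)⌋ (r, τ fixed), the supermultiplicative inequality P(L_n ∈ B̄_LP(μ,δ))^N ≤ C_{n,T} · P(L_T ∈ B̄_LP(μ, f(ε,δ))) holds for all suitable n, T. Then the Ruelle–Lanford function exists at μ: lim_{δ→0} liminf_n (1/n)log P(L_n ∈ B_LP(μ,δ)) = lim_{δ→0} limsup_n (1/n)log P(L_n ∈ B_LP(μ,δ)). -/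

import Mathlib

open MeasureTheory Filter Topology
open scoped ENNReal ProbabilityTheory

private lemma ereal_le_of_forall_add {x y : EReal} (h : ∀ η : ℝ, 0 < η → x ≤ y + ↑η) : x ≤ y := by
  induction y with
  | bot => simpa using h 1 one_pos
  | coe a =>
    rw [← EReal.le_of_forall_lt_iff_le]
    intro z hz
    have haz : a < z := by exact_mod_cast hz
    have := h (z - a) (sub_pos.2 haz)
    rwa [show ((a : EReal) + ↑(z - a)) = (z : EReal) by norm_cast; ring] at this
  | top => exact le_top

private lemma ratio_tendsto (q : ℕ) (hq : 1 ≤ q) :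
    Tendsto (fun T : ℕ => ((T / q : ℕ) : ℝ) / (T : ℝ)) atTop (𝓝 ((q : ℝ)⁻¹)) := by
  have hqR : (0:ℝ) < q := by exact_mod_cast hq
  have hinv : Tendsto (fun T:ℕ => (T:ℝ)⁻¹) atTop (𝓝 0) :=
    tendsto_inv_atTop_zero.comp tendsto_natCast_atTop_atTop
  have hlo : Tendsto (fun T : ℕ => (q:ℝ)⁻¹ - (T:ℝ)⁻¹) atTop (𝓝 ((q : ℝ)⁻¹)) := by
    simpa using tendsto_const_nhds.sub hinv
  have hhi : Tendsto (fun _ : ℕ => (q:ℝ)⁻¹) atTop (𝓝 ((q : ℝ)⁻¹)) := tendsto_const_nhds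
  have hle1 : ∀ᶠ T : ℕ in atTop, (q:ℝ)⁻¹ - (T:ℝ)⁻¹ ≤ ((T / q : ℕ) : ℝ) / (T : ℝ) := by
    filter_upwards [eventually_ge_atTop 1] with T hT1
    have hTpos : (0:ℝ) < T := by exact_mod_cast hT1
    have h0 : T < T / q * q + q := Nat.lt_div_mul_add hq
    have h1 : (T:ℝ) < ((T / q : ℕ) : ℝ) * (q:ℝ) + (q:ℝ) := by exact_mod_cast h0
    have key2 : (T:ℝ)/q - 1 ≤ ((T / q : ℕ) : ℝ) := by
      rw [sub_le_iff_le_add, div_le_iff₀ hqR]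
      nlinarith
    have h3 : ((T:ℝ)/q - 1)/T ≤ ((T / q : ℕ) : ℝ)/T :=
      (div_le_div_iff_of_pos_right hTpos).2 key2
    have h4 : ((T:ℝ)/q - 1)/T = (q:ℝ)⁻¹ - (T:ℝ)⁻¹ := by
      field_simp
    linarith [h3]
  have hle2 : ∀ᶠ T : ℕ in atTop, ((T / q : ℕ) : ℝ) / (T : ℝ) ≤ (q:ℝ)⁻¹ := by
    filter_upwards [eventually_ge_atTop 1] with T hT1
    have hTpos : (0:ℝ) < T := by exact_mod_cast hT1
    have h2 : ((T / q : ℕ) : ℝ) ≤ (T:ℝ)/q := Nat.cast_div_le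
    calc ((T / q : ℕ) : ℝ)/T ≤ ((T:ℝ)/q)/T := (div_le_div_iff_of_pos_right hTpos).2 h2
      _ = (q:ℝ)⁻¹ := by
          rw [div_div, mul_comm, ← div_div, div_self (ne_of_gt hTpos), one_div]
  exact tendsto_of_tendsto_of_tendsto_of_le_of_le' hlo hhi hle1 hle2

/-- Let `(L_n)` be the (random) empirical measures of a Markov chain on
`ℝ^d`. Suppose that for `μ ∈ P(ℝ^d)`, functions `f(ε, δ)` with
`lim_{ε→0} lim_{δ→0} f(ε,δ) = 0`, constants `C_{n,T}` with
`lim_{n→∞} lim_{T→∞} (1/T) log C_{n,T} = 0`, and `N = ⌊T/(n + rτ)⌋` (`r`, `τ` fixed), the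
supermultiplicative inequality
`P(L_n ∈ B̄_LP(μ,δ))^N ≤ C_{n,T} · P(L_T ∈ B̄_LP(μ, f(ε,δ)))`
holds for all suitable `n, T`. Then the Ruelle–Lanford function exists at `μ`:
`lim_{δ→0} liminf_n (1/n) log P(L_n ∈ B_LP(μ,δ)) = lim_{δ→0} limsup_n (1/n) log P(L_n ∈ B_LP(μ,δ))`,
the limits as `δ → 0⁺` being written as infima over `δ > 0` (the quantities are monotone
in `δ`). -/
theorem stmt17 {d : ℕ} {Ω : Type*} [MeasureSpace Ω] [IsProbabilityMeasure (ℙ : Measure Ω)]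
    (L : ℕ → Ω → Measure (EuclideanSpace ℝ (Fin d)))
    (hL : ∀ n ω, IsProbabilityMeasure (L n ω))
    (μ : Measure (EuclideanSpace ℝ (Fin d))) (hμ : IsProbabilityMeasure μ)
    (r τ : ℕ)
    (f : ℝ → ℝ → ℝ) (g : ℝ → ℝ)
    (hf0 : ∀ ε > (0:ℝ), ∀ δ > (0:ℝ), 0 ≤ f ε δ)
    (hfg : ∀ ε > (0:ℝ), Tendsto (f ε) (𝓝[>] 0) (𝓝 (g ε)))
    (hg : Tendsto g (𝓝[>] 0) (𝓝 0))
    (C : ℕ → ℕ → ℝ) (c : ℕ → ℝ)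
    (hCc : ∀ n, Tendsto (fun T : ℕ => (T : ℝ)⁻¹ * Real.log (C n T)) atTop (𝓝 (c n)))
    (hc : Tendsto c atTop (𝓝 0))
    (hsuper : ∀ ε > (0:ℝ), ∀ δ > (0:ℝ), ∃ n₀ : ℕ, ∀ n ≥ n₀, ∃ T₀ : ℕ, ∀ T ≥ T₀,
      (ℙ {ω | levyProkhorovDist (L n ω) μ ≤ δ}) ^ (T / (n + r * τ))
        ≤ ENNReal.ofReal (C n T) * ℙ {ω | levyProkhorovDist (L T ω) μ ≤ f ε δ}) :
    (⨅ δ : {x : ℝ // 0 < x}, Filter.liminf (fun n : ℕ =>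
        (((n : ℝ)⁻¹ : ℝ) : EReal) *
          ENNReal.log (ℙ {ω | levyProkhorovDist (L n ω) μ < δ.1})) atTop)
    = (⨅ δ : {x : ℝ // 0 < x}, Filter.limsup (fun n : ℕ =>
        (((n : ℝ)⁻¹ : ℝ) : EReal) *
          ENNReal.log (ℙ {ω | levyProkhorovDist (L n ω) μ < δ.1})) atTop) := by
  refine le_antisymm (iInf_mono fun δ => liminf_le_limsup) (le_iInf fun δ'' => ?_)
  -- choose ε then δ
  obtain ⟨ε, hgε, hε⟩ : ∃ ε, g ε < δ''.1 ∧ 0 < ε := by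
    have h1 : ∀ᶠ ε in 𝓝[>] (0:ℝ), g ε < δ''.1 := hg (Iio_mem_nhds δ''.2)
    exact (h1.and self_mem_nhdsWithin).exists
  obtain ⟨δ, hfεδ, hδ⟩ : ∃ δ, f ε δ < δ''.1 ∧ 0 < δ := by
    have h1 : ∀ᶠ x in 𝓝[>] (0:ℝ), f ε x < δ''.1 := (hfg ε hε) (Iio_mem_nhds hgε)
    exact (h1.and self_mem_nhdsWithin).exists
  obtain ⟨n₀, hn₀⟩ := hsuper ε hε δ hδ
  -- auxiliary measure quantities
  set S : EReal := Filter.liminf (fun T : ℕ =>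
      (((T : ℝ)⁻¹ : ℝ) : EReal) *
        ENNReal.log (ℙ {ω | levyProkhorovDist (L T ω) μ ≤ f ε δ})) atTop with hS
  have hnonneg : ∀ m : ℕ, (0 : EReal) ≤ (((m : ℝ)⁻¹ : ℝ) : EReal) := by
    intro m
    exact_mod_cast EReal.coe_nonneg.2 (inv_nonneg.2 (Nat.cast_nonneg m))
  have hstep3 : S ≤ Filter.liminf (fun n : ℕ =>
      (((n : ℝ)⁻¹ : ℝ) : EReal) *
        ENNReal.log (ℙ {ω | levyProkhorovDist (L n ω) μ < δ''.1})) atTop := by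
    refine liminf_le_liminf (Eventually.of_forall fun T => ?_)
    refine mul_le_mul_of_nonneg_left ?_ (hnonneg T)
    refine ENNReal.log_monotone (measure_mono fun ω hω => ?_)
    exact lt_of_le_of_lt hω hfεδ
  have hstep1 : Filter.limsup (fun n : ℕ =>
      (((n : ℝ)⁻¹ : ℝ) : EReal) *
        ENNReal.log (ℙ {ω | levyProkhorovDist (L n ω) μ < δ})) atTop
      ≤ Filter.limsup (fun n : ℕ =>
      (((n : ℝ)⁻¹ : ℝ) : EReal) *
        ENNReal.log (ℙ {ω | levyProkhorovDist (L n ω) μ ≤ δ})) atTop := by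
    refine limsup_le_limsup (Eventually.of_forall fun n => ?_)
    refine mul_le_mul_of_nonneg_left ?_ (hnonneg n)
    exact ENNReal.log_monotone (measure_mono fun ω (hω : levyProkhorovDist (L n ω) μ < δ) => le_of_lt hω)
  have hstep2 : Filter.limsup (fun n : ℕ =>
      (((n : ℝ)⁻¹ : ℝ) : EReal) *
        ENNReal.log (ℙ {ω | levyProkhorovDist (L n ω) μ ≤ δ})) atTop ≤ S := by
    refine ereal_le_of_forall_add fun η hη => ?_
    refine limsup_le_of_le (by isBoundedDefault) ?_
    filter_upwards [hc.eventually_lt_const hη, eventually_ge_atTop (max n₀ 1)] with n hcn hn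
    have hn1 : 1 ≤ n := le_trans (le_max_right _ _) hn
    have hnn₀ : n₀ ≤ n := le_trans (le_max_left _ _) hn
    have hnR : (0:ℝ) < n := by exact_mod_cast hn1
    set q : ℕ := n + r * τ with hqdef
    have hq1 : 1 ≤ q := le_trans hn1 (Nat.le_add_right _ _)
    have hqR : (0:ℝ) < q := by exact_mod_cast hq1
    set Pn : ℝ≥0∞ := ℙ {ω | levyProkhorovDist (L n ω) μ ≤ δ} with hPn
    set Ln : EReal := ENNReal.log Pn with hLn
    rcases eq_or_ne Pn 0 with h0 | h0
    · have : Ln = ⊥ := by rw [hLn, h0, ENNReal.log_zero]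
      rw [this, EReal.coe_mul_bot_of_pos (by positivity)]
      exact bot_le
    · -- Ln is a real number ≤ 0
      have hP1 : Pn ≤ 1 := prob_le_one
      have hLn0 : Ln ≤ 0 := by
        have := ENNReal.log_monotone hP1
        rwa [ENNReal.log_one] at this
      have hne_bot : Ln ≠ ⊥ := by simp [hLn, h0]
      have hne_top : Ln ≠ ⊤ := by
        intro h
        rw [h] at hLn0
        exact (not_le.2 (lt_of_lt_of_le (EReal.coe_lt_top 0) (by exact_mod_cast hLn0))) le_rfl
      set x : ℝ := Ln.toReal with hxdef
      have hLx : Ln = (x : EReal) := (EReal.coe_toReal hne_top hne_bot).symm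
      have hx0 : x ≤ 0 := by
        have := hLn0
        rw [hLx] at this
        exact_mod_cast this
      obtain ⟨T₀, hT₀⟩ := hn₀ n hnn₀
      -- the key claim coming from supermultiplicativity
      have key : (((q:ℝ)⁻¹ * x - c n : ℝ) : EReal) ≤ S := by
        set w : ℕ → ℝ := fun T =>
          ((T / q : ℕ) : ℝ) / (T:ℝ) * x - (T:ℝ)⁻¹ * Real.log (C n T) with hwdef
        have hwle : ∀ᶠ T in atTop, ((w T : ℝ) : EReal) ≤
            (((T : ℝ)⁻¹ : ℝ) : EReal) *
              ENNReal.log (ℙ {ω | levyProkhorovDist (L T ω) μ ≤ f ε δ}) := by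
          filter_upwards [eventually_ge_atTop (max T₀ q)] with T hT
          have hTT0 : T₀ ≤ T := le_trans (le_max_left _ _) hT
          have hTq : q ≤ T := le_trans (le_max_right _ _) hT
          have hT1 : 1 ≤ T := le_trans hq1 hTq
          have hTpos : (0:ℝ) < T := by exact_mod_cast hT1
          have hsup := hT₀ T hTT0
          set N : ℕ := T / q with hNdef
          have hN1 : 1 ≤ N := (Nat.one_le_div_iff (lt_of_lt_of_le Nat.one_pos hq1)).2 hTq
          have hlog := ENNReal.log_monotone hsup
          rw [ENNReal.log_pow, ENNReal.log_mul_add, ← hPn, ← hLn, hLx] at hlog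
          set B : EReal := ENNReal.log (ℙ {ω | levyProkhorovDist (L T ω) μ ≤ f ε δ}) with hB
          by_cases hC : C n T ≤ 0
          · exfalso
            rw [ENNReal.log_ofReal, if_pos hC, EReal.bot_add, le_bot_iff] at hlog
            have : (((N:ℝ) * x : ℝ) : EReal) = ⊥ := by rw [← hlog]; norm_cast
            exact EReal.coe_ne_bot _ this
          · push_neg at hC
            rw [ENNReal.log_ofReal_of_pos hC] at hlog
            have hBne_bot : B ≠ ⊥ := by
              intro hb
              rw [hb, EReal.add_bot, le_bot_iff] at hlog
              have : (((N:ℝ) * x : ℝ) : EReal) = ⊥ := by rw [← hlog]; norm_cast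
              exact EReal.coe_ne_bot _ this
            have hB0 : B ≤ 0 := by
              have := ENNReal.log_monotone
                (prob_le_one (μ := ℙ) (s := {ω | levyProkhorovDist (L T ω) μ ≤ f ε δ}))
              rwa [ENNReal.log_one, ← hB] at this
            have hBne_top : B ≠ ⊤ := by
              intro hb
              rw [hb] at hB0
              exact (not_le.2 (lt_of_lt_of_le (EReal.coe_lt_top 0) (by exact_mod_cast hB0))) le_rfl
            set b : ℝ := B.toReal with hbdef
            have hBb : B = (b : EReal) := (EReal.coe_toReal hBne_top hBne_bot).symm
            rw [hBb] at hlog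
            have hreal : (N:ℝ) * x ≤ Real.log (C n T) + b := by
              rw [← EReal.coe_coe_eq_natCast] at hlog
              exact_mod_cast hlog
            rw [hBb, show ((((T:ℝ)⁻¹ : ℝ) : EReal) * ((b:ℝ) : EReal)) = (((T:ℝ)⁻¹ * b : ℝ) : EReal)
              from by norm_cast]
            rw [EReal.coe_le_coe_iff]
            have h2 : (T:ℝ)⁻¹ * ((N:ℝ) * x) ≤ (T:ℝ)⁻¹ * (Real.log (C n T) + b) :=
              mul_le_mul_of_nonneg_left hreal (by positivity)
            have h3 : ((N : ℕ) : ℝ) / (T:ℝ) * x = (T:ℝ)⁻¹ * ((N:ℝ) * x) := by ring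
            have h4 : (T:ℝ)⁻¹ * (Real.log (C n T) + b)
                = (T:ℝ)⁻¹ * Real.log (C n T) + (T:ℝ)⁻¹ * b := by ring
            simp only [hwdef]
            rw [← hNdef, h3]
            linarith [h2, h4]
        have hwt : Tendsto w atTop (𝓝 ((q:ℝ)⁻¹ * x - c n)) := by
          have hρ := ratio_tendsto q hq1
          exact (hρ.mul_const x).sub (hCc n)
        have hliminfw : Filter.liminf (fun T : ℕ => ((w T : ℝ) : EReal)) atTop
            = (((q:ℝ)⁻¹ * x - c n : ℝ) : EReal) :=
          (EReal.tendsto_coe.2 hwt).liminf_eq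
        rw [← hliminfw]
        exact liminf_le_liminf hwle
      -- conclude for this n
      rw [hLx]
      have h1 : (n:ℝ)⁻¹ * x ≤ (q:ℝ)⁻¹ * x := by
        have hqn : (q:ℝ)⁻¹ ≤ (n:ℝ)⁻¹ := by
          apply inv_anti₀ hnR
          exact_mod_cast Nat.le_add_right n (r * τ)
        exact mul_le_mul_of_nonpos_right hqn hx0
      calc ((((n : ℝ)⁻¹ : ℝ)) : EReal) * ((x:ℝ) : EReal)
          = (((n:ℝ)⁻¹ * x : ℝ) : EReal) := by norm_cast
        _ ≤ (((q:ℝ)⁻¹ * x : ℝ) : EReal) := by exact_mod_cast h1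
        _ = (((q:ℝ)⁻¹ * x - c n : ℝ) : EReal) + ((c n : ℝ) : EReal) := by norm_cast; ring
        _ ≤ S + ((c n : ℝ) : EReal) := add_le_add_left key _
        _ ≤ S + (η : EReal) := add_le_add_right (show ((c n : ℝ) : EReal) ≤ (η : EReal) by exact_mod_cast le_of_lt hcn) S
  exact iInf_le_of_le ⟨δ, hδ⟩ (le_trans hstep1 (le_trans hstep2 hstep3))
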